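/- Let C be a binary linear code in 𝔽₂ⁿ with minimum distance at least 7. Then in Γ(C), for any two vertices u, v at distance 2 we have |Γ₂(u) ∩ Γ(v)| = 0 (a₂ = 0), and for any two vertices at distance 3 we have exactly 3 common neighbors with the sphere of radius 2 (c₃ = 3). -/

import Mathlib

/-- The standard basis vector `e_i` of `𝔽₂ⁿ`. -/
def stdBasis (n : ℕ) (i : Fin n) : Fin n → ZMod 2 :=
  fun k => if k = i then 1 else 0

lemma stdBasis_add_self (n : ℕ) (i : Fin n) : stdBasis n i + stdBasis n i = 0 := by
  funext k; exact CharTwo.add_self_eq_zero _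

/-- The coset graph `Γ(C)` of a binary linear code `C ≤ 𝔽₂ⁿ`: vertices are the
cosets of `C`, with `x + C` adjacent to `x + e_i + C` (when distinct). -/
def cosetGraph {n : ℕ} (C : Submodule (ZMod 2) (Fin n → ZMod 2)) :
    SimpleGraph ((Fin n → ZMod 2) ⧸ C) where
  Adj a b := a ≠ b ∧ ∃ i : Fin n, b = a + Submodule.Quotient.mk (stdBasis n i)
  symm := by
    constructor
    rintro a b ⟨hne, i, rfl⟩
    refine ⟨hne.symm, i, ?_⟩
    rw [add_assoc, ← Submodule.Quotient.mk_add, stdBasis_add_self]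
    simp
  loopless := ⟨fun a h => h.1 rfl⟩

/-- `C` has minimum distance at least `d`: every nonzero codeword has
Hamming weight at least `d`. -/
def MinDistAtLeast {n : ℕ} (C : Submodule (ZMod 2) (Fin n → ZMod 2)) (d : ℕ) : Prop :=
  ∀ c ∈ C, c ≠ 0 → d ≤ hammingNorm c

/- ### Auxiliary lemmas -/

lemma zmod2_eq_one {a : ZMod 2} (h : a ≠ 0) : a = 1 := by revert h; revert a; decide

lemma hN_def {n : ℕ} (x : Fin n → ZMod 2) :
    hammingNorm x = (Finset.univ.filter fun k => x k ≠ 0).card := rfl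

lemma norm_stdBasis (n : ℕ) (i : Fin n) : hammingNorm (stdBasis n i) = 1 := by
  rw [hN_def]
  have : (Finset.univ.filter fun k => stdBasis n i k ≠ 0) = {i} := by
    ext k; by_cases h : k = i <;> simp [stdBasis, h]
  rw [this, Finset.card_singleton]

lemma stdBasis_ne_zero (n : ℕ) (i : Fin n) : stdBasis n i ≠ 0 := by
  intro h
  have := congrFun h i
  simp [stdBasis] at this

lemma hnorm_add_le {n : ℕ} (x y : Fin n → ZMod 2) :
    hammingNorm (x + y) ≤ hammingNorm x + hammingNorm y := by
  rw [hN_def, hN_def, hN_def]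
  refine le_trans (Finset.card_le_card ?_) (Finset.card_union_le _ _)
  intro k hk
  simp only [Finset.mem_filter, Finset.mem_union, Finset.mem_univ, true_and,
    Pi.add_apply] at *
  by_contra h
  push_neg at h
  rw [h.1, h.2, add_zero] at hk
  exact hk rfl

lemma norm_add_stdBasis {n : ℕ} (x : Fin n → ZMod 2) (i : Fin n) :
    hammingNorm (x + stdBasis n i) =
      if x i = 0 then hammingNorm x + 1 else hammingNorm x - 1 := by
  rw [hN_def, hN_def]
  have hval : ∀ k, (x + stdBasis n i) k = if k = i then x i + 1 else x k := by
    intro k; by_cases h : k = i <;> simp [stdBasis, h]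
  by_cases h : x i = 0
  · rw [if_pos h]
    have : (Finset.univ.filter fun k => (x + stdBasis n i) k ≠ 0)
        = insert i (Finset.univ.filter fun k => x k ≠ 0) := by
      ext k
      by_cases hk : k = i
      · subst hk; simp [hval, h]
      · simp [hval, hk]
    rw [this, Finset.card_insert_of_notMem (by simp [h])]
  · rw [if_neg h]
    have h1 : x i = 1 := zmod2_eq_one h
    have : (Finset.univ.filter fun k => (x + stdBasis n i) k ≠ 0)
        = (Finset.univ.filter fun k => x k ≠ 0).erase i := by
      ext k
      by_cases hk : k = i
      · subst hk
        simp only [hval, if_pos rfl, h1, Finset.mem_erase, ne_eq, not_true_eq_false,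
          false_and, iff_false, Finset.mem_filter]
        simp; decide
      · simp [hval, hk]
    rw [this, Finset.card_erase_of_mem (by simp [h])]

section Graph

variable {n : ℕ} {C : Submodule (ZMod 2) (Fin n → ZMod 2)}

lemma rep_unique (hd : MinDistAtLeast C 7) {x y : Fin n → ZMod 2}
    (h : (Submodule.Quotient.mk x : (Fin n → ZMod 2) ⧸ C) = Submodule.Quotient.mk y)
    (hxy : hammingNorm x + hammingNorm y ≤ 6) : x = y := by
  rw [Submodule.Quotient.eq] at h
  by_contra hne
  have hx0 : x - y ≠ 0 := sub_ne_zero.mpr hne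
  have h7 := hd _ h hx0
  have hle : hammingNorm (x - y) ≤ hammingNorm x + hammingNorm y := by
    have hsum : x - y = x + y := by
      funext k; rw [Pi.sub_apply, Pi.add_apply, CharTwo.sub_eq_add]
    rw [hsum]; exact hnorm_add_le x y
  omega

lemma mk_stdBasis_ne_zero (hd : MinDistAtLeast C 7) (i : Fin n) :
    (Submodule.Quotient.mk (stdBasis n i) : (Fin n → ZMod 2) ⧸ C) ≠ 0 := by
  intro h
  rw [Submodule.Quotient.mk_eq_zero] at h
  have := hd _ h (stdBasis_ne_zero n i)
  rw [norm_stdBasis] at this; omega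

lemma walk_rep {u v : (Fin n → ZMod 2) ⧸ C} (p : (cosetGraph C).Walk u v) :
    ∃ x : Fin n → ZMod 2, v = u + Submodule.Quotient.mk x ∧ hammingNorm x ≤ p.length := by
  induction p with
  | nil => exact ⟨0, by simp, by simp⟩
  | @cons a b c h p ih =>
    obtain ⟨y, hy, hylen⟩ := ih
    obtain ⟨hne, i, hi⟩ := id h
    refine ⟨y + stdBasis n i, ?_, ?_⟩
    · rw [hy, hi, Submodule.Quotient.mk_add]; abel
    · refine le_trans (hnorm_add_le _ _) ?_
      rw [norm_stdBasis, SimpleGraph.Walk.length_cons]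
      omega

lemma exists_walk_aux (hd : MinDistAtLeast C 7) :
    ∀ m : ℕ, ∀ (x : Fin n → ZMod 2) (u : (Fin n → ZMod 2) ⧸ C), hammingNorm x ≤ m →
    ∃ p : (cosetGraph C).Walk u (u + Submodule.Quotient.mk x), p.length ≤ m := by
  intro m
  induction m with
  | zero =>
    intro x u hx
    have hx0 : x = 0 := hammingNorm_eq_zero.mp (Nat.le_zero.mp hx)
    subst hx0
    exact ⟨SimpleGraph.Walk.nil.copy rfl (by simp), by rw [SimpleGraph.Walk.length_copy]; simp⟩
  | succ m ih =>
    intro x u hx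
    by_cases h0 : x = 0
    · subst h0; exact ⟨SimpleGraph.Walk.nil.copy rfl (by simp), by rw [SimpleGraph.Walk.length_copy]; simp⟩
    · obtain ⟨i, hi⟩ : ∃ i, x i ≠ 0 := by
        by_contra hc; push_neg at hc; exact h0 (funext fun k => hc k)
      have h1 : 1 ≤ hammingNorm x := by
        rcases Nat.eq_zero_or_pos (hammingNorm x) with h | h
        · exact absurd (hammingNorm_eq_zero.mp h) h0
        · exact h
      have hnorm' : hammingNorm (x + stdBasis n i) ≤ m := by
        rw [norm_add_stdBasis, if_neg hi]; omega
      have hadj : (cosetGraph C).Adj u (u + Submodule.Quotient.mk (stdBasis n i)) := by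
        refine ⟨?_, i, rfl⟩
        intro h
        exact mk_stdBasis_ne_zero hd i (left_eq_add.mp h)
      obtain ⟨p, hp⟩ := ih (x + stdBasis n i) (u + Submodule.Quotient.mk (stdBasis n i)) hnorm'
      refine ⟨(SimpleGraph.Walk.cons hadj p).copy rfl ?_, ?_⟩
      · rw [Submodule.Quotient.mk_add]
        have h2 : (Submodule.Quotient.mk (stdBasis n i) : (Fin n → ZMod 2) ⧸ C)
            + Submodule.Quotient.mk (stdBasis n i) = 0 := by
          rw [← Submodule.Quotient.mk_add, stdBasis_add_self, Submodule.Quotient.mk_zero]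
        calc u + Submodule.Quotient.mk (stdBasis n i)
              + (Submodule.Quotient.mk x + Submodule.Quotient.mk (stdBasis n i))
            = u + Submodule.Quotient.mk x
              + (Submodule.Quotient.mk (stdBasis n i) + Submodule.Quotient.mk (stdBasis n i)) := by
              abel
          _ = u + Submodule.Quotient.mk x := by rw [h2, add_zero]
      · rw [SimpleGraph.Walk.length_copy, SimpleGraph.Walk.length_cons]; omega

lemma dist_le_norm (hd : MinDistAtLeast C 7) (u : (Fin n → ZMod 2) ⧸ C)
    (x : Fin n → ZMod 2) :
    (cosetGraph C).dist u (u + Submodule.Quotient.mk x) ≤ hammingNorm x := by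
  obtain ⟨p, hp⟩ := exists_walk_aux hd (hammingNorm x) x u le_rfl
  exact le_trans (SimpleGraph.dist_le p) hp

lemma cg_dist_eq_norm (hd : MinDistAtLeast C 7) (u : (Fin n → ZMod 2) ⧸ C)
    (x : Fin n → ZMod 2) (hx : hammingNorm x ≤ 3) :
    (cosetGraph C).dist u (u + Submodule.Quotient.mk x) = hammingNorm x := by
  refine le_antisymm (dist_le_norm hd u x) ?_
  obtain ⟨p, _⟩ := exists_walk_aux hd (hammingNorm x) x u le_rfl
  have hreach : (cosetGraph C).Reachable u (u + Submodule.Quotient.mk x) := ⟨p⟩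
  obtain ⟨q, hq⟩ := hreach.exists_walk_length_eq_dist
  obtain ⟨y, hyv, hylen⟩ := walk_rep q
  have hmk : (Submodule.Quotient.mk y : (Fin n → ZMod 2) ⧸ C) = Submodule.Quotient.mk x := by
    exact add_left_cancel (a := u) (by rw [← hyv])
  have hdle : (cosetGraph C).dist u (u + Submodule.Quotient.mk x) ≤ hammingNorm x :=
    dist_le_norm hd u x
  have hylen' : hammingNorm y ≤ (cosetGraph C).dist u (u + Submodule.Quotient.mk x) := by
    rw [← hq]; exact hylen
  have hyx : y = x := rep_unique hd hmk (by omega)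
  exact hyx ▸ hylen'

lemma rep_of_dist (hd : MinDistAtLeast C 7) {u v : (Fin n → ZMod 2) ⧸ C} {d : ℕ}
    (hdist : (cosetGraph C).dist u v = d) (hdpos : 0 < d) (hd3 : d ≤ 3) :
    ∃ x : Fin n → ZMod 2, v = u + Submodule.Quotient.mk x ∧ hammingNorm x = d := by
  have hreach : (cosetGraph C).Reachable u v := by
    by_contra hr
    rw [SimpleGraph.dist_eq_zero_of_not_reachable hr] at hdist; omega
  obtain ⟨q, hq⟩ := hreach.exists_walk_length_eq_dist
  obtain ⟨x, hxv, hxlen⟩ := walk_rep q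
  rw [hq, hdist] at hxlen
  have heq := cg_dist_eq_norm hd u x (hxlen.trans hd3)
  rw [← hxv, hdist] at heq
  exact ⟨x, hxv, heq.symm⟩

end Graph

/-- If `C` has minimum distance at least 7, then in `Γ(C)`: for any vertices
`u, v` at distance 2 there is no neighbor of `v` at distance 2 from `u`
(`a₂ = 0`), and for any vertices at distance 3 there are exactly 3 neighbors of
`v` at distance 2 from `u` (`c₃ = 3`). -/
theorem cosetGraph_a2_c3 {n : ℕ}
    (C : Submodule (ZMod 2) (Fin n → ZMod 2)) (hd : MinDistAtLeast C 7) :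
    (∀ u v : (Fin n → ZMod 2) ⧸ C, (cosetGraph C).dist u v = 2 →
      {w | (cosetGraph C).dist u w = 2 ∧ (cosetGraph C).Adj v w} = ∅) ∧
    (∀ u v : (Fin n → ZMod 2) ⧸ C, (cosetGraph C).dist u v = 3 →
      {w | (cosetGraph C).dist u w = 2 ∧ (cosetGraph C).Adj v w}.ncard = 3) := by
  constructor
  · intro u v huv
    rw [Set.eq_empty_iff_forall_notMem]
    rintro w ⟨hw, hadj⟩
    obtain ⟨x, hxv, hxn⟩ := rep_of_dist hd huv (by omega) (by omega)
    obtain ⟨y, hyw, hyn⟩ := rep_of_dist hd hw (by omega) (by omega)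
    obtain ⟨hne, i, hwvi⟩ := hadj
    have hmk : (Submodule.Quotient.mk y : (Fin n → ZMod 2) ⧸ C)
        = Submodule.Quotient.mk (x + stdBasis n i) := by
      refine add_left_cancel (a := u) ?_
      rw [← hyw, hwvi, hxv, Submodule.Quotient.mk_add]; abel
    have hbound : hammingNorm y + hammingNorm (x + stdBasis n i) ≤ 6 := by
      rw [hyn, norm_add_stdBasis, hxn]; split_ifs <;> omega
    have hyx := rep_unique hd hmk hbound
    have hcontra : hammingNorm y = hammingNorm (x + stdBasis n i) := by rw [hyx]
    rw [hyn, norm_add_stdBasis, hxn] at hcontra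
    split_ifs at hcontra <;> omega
  · intro u v huv
    obtain ⟨z, hzv, hzn⟩ := rep_of_dist hd huv (by omega) (by omega)
    have hset : {w | (cosetGraph C).dist u w = 2 ∧ (cosetGraph C).Adj v w}
        = (fun i => v + Submodule.Quotient.mk (stdBasis n i)) '' {i | z i ≠ 0} := by
      ext w
      simp only [Set.mem_setOf_eq, Set.mem_image]
      constructor
      · rintro ⟨hw2, hne, i, hwi⟩
        obtain ⟨y, hyw, hyn⟩ := rep_of_dist hd hw2 (by omega) (by omega)
        have hmk : (Submodule.Quotient.mk y : (Fin n → ZMod 2) ⧸ C)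
            = Submodule.Quotient.mk (z + stdBasis n i) := by
          refine add_left_cancel (a := u) ?_
          rw [← hyw, hwi, hzv, Submodule.Quotient.mk_add]; abel
        have hbound : hammingNorm y + hammingNorm (z + stdBasis n i) ≤ 6 := by
          have := hnorm_add_le z (stdBasis n i)
          rw [norm_stdBasis] at this; omega
        have hy := rep_unique hd hmk hbound
        have h2 : hammingNorm (z + stdBasis n i) = 2 := by rw [← hy, hyn]
        rw [norm_add_stdBasis, hzn] at h2
        have hzi : z i ≠ 0 := by intro h; rw [if_pos h] at h2; omega
        exact ⟨i, hzi, hwi.symm⟩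
      · rintro ⟨i, hzi, rfl⟩
        have hnz : hammingNorm (z + stdBasis n i) = 2 := by
          rw [norm_add_stdBasis, if_neg hzi, hzn]
        have hvw : v + Submodule.Quotient.mk (stdBasis n i)
            = u + Submodule.Quotient.mk (z + stdBasis n i) := by
          rw [hzv, Submodule.Quotient.mk_add]; abel
        refine ⟨?_, ?_, i, rfl⟩
        · rw [hvw, cg_dist_eq_norm hd u _ (by omega), hnz]
        · intro h
          exact mk_stdBasis_ne_zero hd i (left_eq_add.mp h)
    have hinj : Set.InjOn (fun i => v + Submodule.Quotient.mk (stdBasis n i)) {i | z i ≠ 0} := by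
      intro i _ j _ hij
      simp only at hij
      have hmk : (Submodule.Quotient.mk (stdBasis n i) : (Fin n → ZMod 2) ⧸ C)
          = Submodule.Quotient.mk (stdBasis n j) := add_left_cancel hij
      have heq : stdBasis n i = stdBasis n j :=
        rep_unique hd hmk (by rw [norm_stdBasis, norm_stdBasis]; omega)
      by_contra hne
      have := congrFun heq i
      simp [stdBasis, hne] at this
    rw [hset, Set.ncard_image_of_injOn hinj]
    have hcoe : {i | z i ≠ 0} = ↑(Finset.univ.filter fun i => z i ≠ 0) := by
      ext i; simp
    rw [hcoe, Set.ncard_coe_finset, ← hN_def, hzn]
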